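/- Let n ≥ 2 and let G ∈ 𝒢_{2n} satisfy F(G) = n−1. If G is minimal, then G is n-regular (every vertex has degree n) and both the vertex connectivity κ(G) and the edge connectivity λ(G) are equal to n. -/

import Mathlib

open SimpleGraph
set_option linter.unusedSectionVars false
set_option linter.unusedVariables false

/-- `M` is a perfect matching of the simple graph `G`, viewed as a set of edges:
the edges of `M` are pairwise disjoint edges of `G` covering every vertex. -/
def IsPM {V : Type*} (G : SimpleGraph V) (M : Set (Sym2 V)) : Prop :=
  M ⊆ G.edgeSet ∧
  (∀ e ∈ M, ∀ f ∈ M, e ≠ f → ∀ v : V, v ∈ e → v ∉ f) ∧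
  (∀ v : V, ∃ e ∈ M, v ∈ e)

/-- `S` is a forcing set of the perfect matching `M` of `G`:
`S ⊆ M` and `M` is the unique perfect matching of `G` containing `S`. -/
def IsForcingSet {V : Type*} (G : SimpleGraph V) (M S : Set (Sym2 V)) : Prop :=
  S ⊆ M ∧ ∀ M', IsPM G M' → S ⊆ M' → M' = M

/-- The forcing number `f(G,M)`: smallest cardinality of a forcing set of `M`. -/
noncomputable def forcingNum {V : Type*} (G : SimpleGraph V) (M : Set (Sym2 V)) : ℕ :=
  sInf {k | ∃ S, IsForcingSet G M S ∧ S.ncard = k}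

/-- The minimum forcing number `f(G)`. -/
noncomputable def minForcing {V : Type*} (G : SimpleGraph V) : ℕ :=
  sInf {k | ∃ M, IsPM G M ∧ forcingNum G M = k}

/-- The maximum forcing number `F(G)`. -/
noncomputable def maxForcing {V : Type*} (G : SimpleGraph V) : ℕ :=
  sSup {k | ∃ M, IsPM G M ∧ forcingNum G M = k}

/-- Vertex connectivity `κ(G)`: least size of a set of vertices whose deletion
disconnects the graph or leaves at most one vertex. -/
noncomputable def vertexConn {V : Type*} (G : SimpleGraph V) : ℕ :=
  sInf {k | ∃ X : Set V, X.ncard = k ∧ (¬ (G.induce Xᶜ).Connected ∨ Xᶜ.ncard ≤ 1)}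

/-- Edge connectivity `λ(G)`: least size of a set of edges whose deletion
disconnects the graph. -/
noncomputable def edgeConn {V : Type*} (G : SimpleGraph V) : ℕ :=
  sInf {k | ∃ F : Set (Sym2 V), F ⊆ G.edgeSet ∧ F.ncard = k ∧ ¬ (G.deleteEdges F).Connected}

/-- `G` is `l`-extendable: `G` is connected, has at least `2l+2` vertices, has a
perfect matching, and every matching of size `l` extends to a perfect matching. -/
def IsExtendable {V : Type*} [Fintype V] (G : SimpleGraph V) (l : ℕ) : Prop :=
  G.Connected ∧ 2 * l + 2 ≤ Fintype.card V ∧ (∃ M, IsPM G M) ∧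
    ∀ N : Set (Sym2 V), N ⊆ G.edgeSet →
      (∀ e ∈ N, ∀ f ∈ N, e ≠ f → ∀ v : V, v ∈ e → v ∉ f) → N.ncard = l →
      ∃ M, IsPM G M ∧ N ⊆ M

/-- `G` is factor-critical: deleting any vertex leaves a graph with a perfect matching. -/
def IsFactorCritical {V : Type*} (G : SimpleGraph V) : Prop :=
  ∀ v : V, ∃ M, IsPM (G.induce {v}ᶜ) M

/-- `o(G)`: the number of connected components of odd order. -/
noncomputable def oddComponents {V : Type*} (G : SimpleGraph V) : ℕ :=
  {c : G.ConnectedComponent | Odd c.supp.ncard}.ncard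

/-- `G` belongs to `𝒦_{n,n}⁺`: it is obtained from `K_{n,n}` by adding edges inside one
partite set; equivalently there is an independent set `A` of size `n` all of whose
vertices are adjacent to all vertices outside `A`. -/
def InKnnPlus {V : Type*} (n : ℕ) (G : SimpleGraph V) : Prop :=
  ∃ A : Set V, A.ncard = n ∧ (∀ a ∈ A, ∀ b ∈ A, ¬ G.Adj a b) ∧
    ∀ a ∈ A, ∀ b ∉ A, G.Adj a b

/-- `M` is a perfect matching of the subgraph of `G` induced by the vertex set `T`. -/
def IsPMOn {V : Type*} (G : SimpleGraph V) (T : Set V) (M : Set (Sym2 V)) : Prop :=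
  M ⊆ G.edgeSet ∧ (∀ e ∈ M, ∀ w : V, w ∈ e → w ∈ T) ∧
  (∀ e ∈ M, ∀ f ∈ M, e ≠ f → ∀ v : V, v ∈ e → v ∉ f) ∧
  (∀ w ∈ T, ∃ e ∈ M, w ∈ e)

/-- The forcing number of the perfect matching `M` of the subgraph of `G`
induced by the vertex set `T`. -/
noncomputable def forcingNumOn {V : Type*} (G : SimpleGraph V) (T : Set V)
    (M : Set (Sym2 V)) : ℕ :=
  sInf {k | ∃ S, S ⊆ M ∧ (∀ M', IsPMOn G T M' → S ⊆ M' → M' = M) ∧ S.ncard = k}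

/-- `{i,j}` is one of the `k` special pairs `{2t, 2t+1}` (0-indexed), `t < k`. -/
def pairIdx (k : ℕ) {n : ℕ} (i j : Fin n) : Prop :=
  ∃ t, t < k ∧ ((i.val = 2 * t ∧ j.val = 2 * t + 1) ∨ (j.val = 2 * t ∧ i.val = 2 * t + 1))

/-- The graph `H_k` on vertices `u_0,…,u_{n-1}` (left copy) and `v_0,…,v_{n-1}`
(right copy): edges `u_i v_i` for all `i`; `u_{2t} u_{2t+1}` and `v_{2t} v_{2t+1}`
for `t < k`; and `u_i v_j`, `u_j v_i` for every pair `i ≠ j` that is not one of the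
`k` special pairs. -/
def Hgraph (n k : ℕ) : SimpleGraph (Fin n ⊕ Fin n) :=
  SimpleGraph.fromRel (fun x y =>
    match x, y with
    | Sum.inl i, Sum.inr j => i = j ∨ ¬ pairIdx k i j
    | Sum.inl i, Sum.inl j => pairIdx k i j
    | Sum.inr i, Sum.inr j => pairIdx k i j
    | Sum.inr _, Sum.inl _ => False)

/-- The perfect matching `M₀ = {u_i v_i : i}` of `H_k`. -/
def M0 (n : ℕ) : Set (Sym2 (Fin n ⊕ Fin n)) :=
  {e | ∃ i : Fin n, e = s(Sum.inl i, Sum.inr i)}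

section Helpers
section Basics
variable {V : Type*} {G : SimpleGraph V} {M M' : Set (Sym2 V)}

lemma pm_unique_superset (hM : IsPM G M) (hM' : IsPM G M') (h : M ⊆ M') : M' = M := by
  obtain ⟨hE, hD, hC⟩ := hM
  obtain ⟨hE', hD', hC'⟩ := hM'
  apply Set.Subset.antisymm _ h
  intro x hx
  by_contra hxM
  induction x using Sym2.ind with
  | _ a b =>
    obtain ⟨e, heM, hae⟩ := hC a
    exact hD' _ hx _ (h heM) (fun hh => hxM (hh ▸ heM)) a (by simp) hae

lemma pm_partner (hM : IsPM G M) (v : V) : ∃ w, w ≠ v ∧ s(v, w) ∈ M := by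
  obtain ⟨hE, hD, hC⟩ := hM
  obtain ⟨e, heM, hve⟩ := hC v
  induction e using Sym2.ind with
  | _ a b =>
    have hab : a ≠ b := (G.ne_of_adj (hE heM))
    rcases Sym2.mem_iff.1 hve with rfl | rfl
    · exact ⟨b, fun h => hab h.symm, heM⟩
    · exact ⟨a, hab, by rwa [Sym2.eq_swap]⟩

lemma pm_partner_unique (hM : IsPM G M) {v w w' : V}
    (h1 : s(v, w) ∈ M) (h2 : s(v, w') ∈ M) : w = w' := by
  obtain ⟨hE, hD, hC⟩ := hM
  by_cases he : s(v, w) = s(v, w')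
  · rcases Sym2.eq_iff.1 he with ⟨_, h⟩ | ⟨h1', h2'⟩
    · exact h
    · exact h2'.trans h1'
  · exact absurd (Sym2.mem_mk_left v w) (fun hh => (hD _ h1 _ h2 he v hh (Sym2.mem_mk_left v w')))

/-- distinct M-edges through the same vertex coincide -/
lemma pm_eq_of_mem (hM : IsPM G M) {e f : Sym2 V} (he : e ∈ M) (hf : f ∈ M)
    {v : V} (hv : v ∈ e) (hv' : v ∈ f) : e = f := by
  by_contra h
  exact hM.2.1 _ he _ hf h v hv hv'

end Basics

section Card
variable {V : Type*} [Fintype V] {G : SimpleGraph V} {M : Set (Sym2 V)} {n : ℕ}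

lemma pm_ncard (hM : IsPM G M) (hcard : Fintype.card V = 2 * n) : M.ncard = n := by
  classical
  set pa : V → V := fun v => (pm_partner hM v).choose with hpa_def
  have hpa : ∀ v, pa v ≠ v ∧ s(v, pa v) ∈ M := fun v => (pm_partner hM v).choose_spec
  set g : V → Sym2 V := fun v => s(v, pa v) with hg_def
  have hg : ∀ v : V, g v ∈ M.toFinset := fun v => Set.mem_toFinset.2 (hpa v).2
  have hfib : ∀ e ∈ M.toFinset, (Finset.univ.filter (fun v => g v = e)).card = 2 := by
    intro e he
    rw [Set.mem_toFinset] at he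
    induction e using Sym2.ind with
    | _ a b =>
      have hab : a ≠ b := G.ne_of_adj (hM.1 he)
      have : Finset.univ.filter (fun v => g v = s(a, b)) = {a, b} := by
        ext v
        simp only [Finset.mem_filter, Finset.mem_univ, true_and, Finset.mem_insert,
          Finset.mem_singleton]
        constructor
        · intro h
          have : v ∈ s(a, b) := h ▸ Sym2.mem_mk_left v (pa v)
          exact Sym2.mem_iff.1 this
        · rintro (rfl | rfl)
          · exact pm_eq_of_mem hM (hpa v).2 he (Sym2.mem_mk_left _ _) (Sym2.mem_mk_left _ _)
          · exact pm_eq_of_mem hM (hpa v).2 he (Sym2.mem_mk_left _ _) (Sym2.mem_mk_right _ _)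
      rw [this, Finset.card_pair hab]
  have hsum := Finset.card_eq_sum_card_fiberwise (fun v (_ : v ∈ Finset.univ) => hg v)
  rw [Finset.sum_congr rfl hfib] at hsum
  simp only [Finset.sum_const, smul_eq_mul, Finset.card_univ] at hsum
  rw [hcard] at hsum
  have : M.toFinset.card = n := by omega
  rw [Set.ncard_eq_toFinset_card', this]

lemma pm_self_forcing (hM : IsPM G M) : IsForcingSet G M M :=
  ⟨subset_rfl, fun _ h1 h2 => pm_unique_superset hM h1 h2⟩

lemma forcingNum_le_ncard (hM : IsPM G M) : forcingNum G M ≤ M.ncard :=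
  Nat.sInf_le ⟨M, pm_self_forcing hM, rfl⟩

lemma forcingNum_exists (hM : IsPM G M) :
    ∃ S, IsForcingSet G M S ∧ S.ncard = forcingNum G M := by
  have h := Nat.sInf_mem (s := {k | ∃ S, IsForcingSet G M S ∧ S.ncard = k})
    ⟨M.ncard, M, pm_self_forcing hM, rfl⟩
  exact h

lemma maxForcing_bddAbove (G : SimpleGraph V) :
    BddAbove {k | ∃ M, IsPM G M ∧ forcingNum G M = k} := by
  classical
  refine ⟨Fintype.card (Sym2 V), ?_⟩
  rintro k ⟨M, hM, rfl⟩
  refine (forcingNum_le_ncard hM).trans ?_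
  simpa [Set.ncard_univ] using Set.ncard_le_ncard (Set.subset_univ M) (Set.toFinite _)

lemma le_maxForcing (hM : IsPM G M) : forcingNum G M ≤ maxForcing G :=
  le_csSup (maxForcing_bddAbove G) ⟨M, hM, rfl⟩

lemma exists_max_pm (hPM : ∃ M, IsPM G M) :
    ∃ M, IsPM G M ∧ forcingNum G M = maxForcing G := by
  obtain ⟨M0, hM0⟩ := hPM
  have h := Nat.sSup_mem (s := {k | ∃ M, IsPM G M ∧ forcingNum G M = k})
    ⟨forcingNum G M0, M0, hM0, rfl⟩ (maxForcing_bddAbove G)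
  obtain ⟨M, hM, hk⟩ := h
  exact ⟨M, hM, hk⟩

lemma exists_alt_pm (hM : IsPM G M) (hMn : M.ncard = n) (hfn : forcingNum G M = n - 1)
    (hn : 2 ≤ n) {e f : Sym2 V} (he : e ∈ M) (hf : f ∈ M) (hef : e ≠ f) :
    ∃ M', IsPM G M' ∧ M \ {e, f} ⊆ M' ∧ M' ≠ M := by
  by_contra h
  push_neg at h
  have hforce : IsForcingSet G M (M \ {e, f}) := by
    exact ⟨Set.diff_subset, fun M' h1 h2 => h M' h1 h2⟩
  have hsub : ({e, f} : Set (Sym2 V)) ⊆ M := by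
    rintro x (rfl | rfl); exacts [he, hf]
  have hcard2 : ({e, f} : Set (Sym2 V)).ncard = 2 := Set.ncard_pair hef
  have hncard : (M \ {e, f}).ncard = n - 2 := by
    rw [Set.ncard_diff hsub (Set.toFinite _), hMn, hcard2]
  have : forcingNum G M ≤ n - 2 := Nat.sInf_le ⟨_, hforce, hncard⟩
  omega

end Card

section Struct
variable {V : Type*} {G : SimpleGraph V} {M M' : Set (Sym2 V)} {a b c d : V}

lemma pm_distinct (hM : IsPM G M) (he : s(a, b) ∈ M) (hf : s(c, d) ∈ M)
    (hef : s(a, b) ≠ s(c, d)) :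
    a ≠ b ∧ c ≠ d ∧ a ≠ c ∧ a ≠ d ∧ b ≠ c ∧ b ≠ d := by
  have hab : a ≠ b := G.ne_of_adj (hM.1 he)
  have hcd : c ≠ d := G.ne_of_adj (hM.1 hf)
  have hdisj := hM.2.1 _ he _ hf hef
  have hna : a ∉ s(c, d) := hdisj a (Sym2.mem_mk_left _ _)
  have hnb : b ∉ s(c, d) := hdisj b (Sym2.mem_mk_right _ _)
  simp only [Sym2.mem_iff, not_or] at hna hnb
  exact ⟨hab, hcd, hna.1, hna.2, hnb.1, hnb.2⟩

lemma pm_new_vertex (hM : IsPM G M) (hM' : IsPM G M') (he : s(a, b) ∈ M)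
    (hf : s(c, d) ∈ M) (hsub : M \ {s(a, b), s(c, d)} ⊆ M')
    {x : Sym2 V} (hx : x ∈ M') (hxM : x ∉ M \ {s(a, b), s(c, d)})
    {v : V} (hv : v ∈ x) : v = a ∨ v = b ∨ v = c ∨ v = d := by
  obtain ⟨g, hgM, hvg⟩ := hM.2.2 v
  by_cases hg : g ∈ ({s(a, b), s(c, d)} : Set (Sym2 V))
  · rcases hg with rfl | rfl
    · rcases Sym2.mem_iff.1 hvg with rfl | rfl
      · exact Or.inl rfl
      · exact Or.inr (Or.inl rfl)
    · rcases Sym2.mem_iff.1 hvg with rfl | rfl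
      · exact Or.inr (Or.inr (Or.inl rfl))
      · exact Or.inr (Or.inr (Or.inr rfl))
  · have hgM' : g ∈ M' := hsub ⟨hgM, hg⟩
    have hxg : x ≠ g := fun h => hxM (h ▸ ⟨hgM, hg⟩)
    exact absurd hvg (hM'.2.1 _ hx _ hgM' hxg v hv)

lemma pm_new_cross (hM : IsPM G M) (hM' : IsPM G M') (he : s(a, b) ∈ M)
    (hf : s(c, d) ∈ M) (hef : s(a, b) ≠ s(c, d))
    (hsub : M \ {s(a, b), s(c, d)} ⊆ M')
    {x : Sym2 V} (hx : x ∈ M') (hxM : x ∉ M) :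
    x = s(a, c) ∨ x = s(a, d) ∨ x = s(b, c) ∨ x = s(b, d) := by
  obtain ⟨hab, hcd, hac, had, hbc, hbd⟩ := pm_distinct hM he hf hef
  have hxM' : x ∉ M \ {s(a, b), s(c, d)} := fun h => hxM h.1
  induction x using Sym2.ind with
  | _ p q =>
    have hpq : p ≠ q := G.ne_of_adj (hM'.1 hx)
    have hp := pm_new_vertex hM hM' he hf hsub hx hxM' (Sym2.mem_mk_left p q)
    have hq := pm_new_vertex hM hM' he hf hsub hx hxM' (Sym2.mem_mk_right p q)
    rcases hp with rfl | rfl | rfl | rfl <;> rcases hq with rfl | rfl | rfl | rfl <;>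
      first
        | exact absurd rfl hpq
        | exact absurd he hxM
        | exact absurd hf hxM
        | exact absurd (by rwa [Sym2.eq_swap] at he) hxM
        | exact absurd (by rwa [Sym2.eq_swap] at hf) hxM
        | exact Or.inl rfl
        | exact Or.inr (Or.inl rfl)
        | exact Or.inr (Or.inr (Or.inl rfl))
        | exact Or.inr (Or.inr (Or.inr rfl))
        | exact Or.inl Sym2.eq_swap
        | exact Or.inr (Or.inl Sym2.eq_swap)
        | exact Or.inr (Or.inr (Or.inl Sym2.eq_swap))
        | exact Or.inr (Or.inr (Or.inr Sym2.eq_swap))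
end Struct

section Struct2
variable {V : Type*} {G : SimpleGraph V} {M M' : Set (Sym2 V)} {a b c d : V}

lemma sym2_ne {p q u w : V} (h1 : ¬(p = u ∧ q = w)) (h2 : ¬(p = w ∧ q = u)) :
    s(p, q) ≠ s(u, w) := fun h => (Sym2.eq_iff.1 h).elim h1 h2

lemma pm_not_mem_ef (hM : IsPM G M) (hM' : IsPM G M') (he : s(a, b) ∈ M)
    (hf : s(c, d) ∈ M) (hef : s(a, b) ≠ s(c, d))
    (hsub : M \ {s(a, b), s(c, d)} ⊆ M') (hne : M' ≠ M) :
    s(a, b) ∉ M' ∧ s(c, d) ∉ M' := by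
  obtain ⟨hab, hcd, hac, had, hbc, hbd⟩ := pm_distinct hM he hf hef
  have hboth : s(a, b) ∈ M' → s(c, d) ∈ M' → False := by
    intro h1 h2
    refine hne (pm_unique_superset hM hM' ?_)
    intro g hg
    by_cases hgef : g ∈ ({s(a, b), s(c, d)} : Set (Sym2 V))
    · rcases hgef with rfl | rfl
      · exact h1
      · exact h2
    · exact hsub ⟨hg, hgef⟩
  constructor
  · intro h1
    have h2 : s(c, d) ∉ M' := fun h2 => hboth h1 h2
    obtain ⟨x, hxM', hcx⟩ := hM'.2.2 c
    have hxM : x ∉ M := by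
      intro hm
      exact h2 ((pm_eq_of_mem hM hm hf hcx (Sym2.mem_mk_left c d)) ▸ hxM')
    rcases pm_new_cross hM hM' he hf hef hsub hxM' hxM with rfl | rfl | rfl | rfl
    · exact hM'.2.1 _ hxM' _ h1
        (sym2_ne (fun h => hbc h.2.symm) (fun h => hab h.1))
        a (Sym2.mem_mk_left a c) (Sym2.mem_mk_left a b)
    · rcases Sym2.mem_iff.1 hcx with h | h
      · exact hac h.symm
      · exact hcd h
    · exact hM'.2.1 _ hxM' _ h1
        (sym2_ne (fun h => hab h.1.symm) (fun h => hac h.2.symm))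
        b (Sym2.mem_mk_left b c) (Sym2.mem_mk_right a b)
    · rcases Sym2.mem_iff.1 hcx with h | h
      · exact hbc h.symm
      · exact hcd h
  · intro h2
    have h1 : s(a, b) ∉ M' := fun h1 => hboth h1 h2
    obtain ⟨x, hxM', hax⟩ := hM'.2.2 a
    have hxM : x ∉ M := fun hm =>
      h1 ((pm_eq_of_mem hM hm he hax (Sym2.mem_mk_left a b)) ▸ hxM')
    rcases pm_new_cross hM hM' he hf hef hsub hxM' hxM with rfl | rfl | rfl | rfl
    · exact hM'.2.1 _ hxM' _ h2
        (sym2_ne (fun h => hac h.1) (fun h => had h.1))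
        c (Sym2.mem_mk_right a c) (Sym2.mem_mk_left c d)
    · exact hM'.2.1 _ hxM' _ h2
        (sym2_ne (fun h => hac h.1) (fun h => had h.1))
        d (Sym2.mem_mk_right a d) (Sym2.mem_mk_right c d)
    · rcases Sym2.mem_iff.1 hax with h | h
      · exact hab h
      · exact hac h
    · rcases Sym2.mem_iff.1 hax with h | h
      · exact hab h
      · exact had h

lemma pm_alt_struct (hM : IsPM G M) (hM' : IsPM G M') (he : s(a, b) ∈ M)
    (hf : s(c, d) ∈ M) (hef : s(a, b) ≠ s(c, d))
    (hsub : M \ {s(a, b), s(c, d)} ⊆ M') (hne : M' ≠ M) :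
    (s(a, c) ∈ M' ∧ s(b, d) ∈ M') ∨ (s(a, d) ∈ M' ∧ s(b, c) ∈ M') := by
  obtain ⟨hab, hcd, hac, had, hbc, hbd⟩ := pm_distinct hM he hf hef
  obtain ⟨hea, hfa⟩ := pm_not_mem_ef hM hM' he hf hef hsub hne
  obtain ⟨x, hxM', hax⟩ := hM'.2.2 a
  have hxM : x ∉ M := fun hm =>
    hea ((pm_eq_of_mem hM hm he hax (Sym2.mem_mk_left a b)) ▸ hxM')
  obtain ⟨y, hyM', hby⟩ := hM'.2.2 b
  have hyM : y ∉ M := fun hm =>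
    hea ((pm_eq_of_mem hM hm he hby (Sym2.mem_mk_right a b)) ▸ hyM')
  rcases pm_new_cross hM hM' he hf hef hsub hxM' hxM with rfl | rfl | rfl | rfl
  · left
    refine ⟨hxM', ?_⟩
    rcases pm_new_cross hM hM' he hf hef hsub hyM' hyM with rfl | rfl | rfl | rfl
    · rcases Sym2.mem_iff.1 hby with h | h
      · exact absurd h hab.symm
      · exact absurd h hbc
    · rcases Sym2.mem_iff.1 hby with h | h
      · exact absurd h hab.symm
      · exact absurd h hbd
    · exact absurd (Sym2.mem_mk_right b c)
        (hM'.2.1 _ hxM' _ hyM'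
          (sym2_ne (fun h => hab h.1) (fun h => hac h.1)) c (Sym2.mem_mk_right a c))
    · exact hyM'
  · right
    refine ⟨hxM', ?_⟩
    rcases pm_new_cross hM hM' he hf hef hsub hyM' hyM with rfl | rfl | rfl | rfl
    · rcases Sym2.mem_iff.1 hby with h | h
      · exact absurd h hab.symm
      · exact absurd h hbc
    · rcases Sym2.mem_iff.1 hby with h | h
      · exact absurd h hab.symm
      · exact absurd h hbd
    · exact hyM'
    · exact absurd (Sym2.mem_mk_right b d)
        (hM'.2.1 _ hxM' _ hyM'
          (sym2_ne (fun h => hab h.1) (fun h => had h.1)) d (Sym2.mem_mk_right a d))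
  · rcases Sym2.mem_iff.1 hax with h | h
    · exact absurd h hab
    · exact absurd h hac
  · rcases Sym2.mem_iff.1 hax with h | h
    · exact absurd h hab
    · exact absurd h had

end Struct2

section C4
variable {V : Type*} [Fintype V] {G : SimpleGraph V} {M : Set (Sym2 V)} {n : ℕ} {a b c d : V}

lemma pm_c4 (hM : IsPM G M) (hMn : M.ncard = n) (hfn : forcingNum G M = n - 1)
    (hn : 2 ≤ n) (he : s(a, b) ∈ M) (hf : s(c, d) ∈ M) (hef : s(a, b) ≠ s(c, d)) :
    (G.Adj a c ∧ G.Adj b d) ∨ (G.Adj a d ∧ G.Adj b c) := by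
  obtain ⟨M', hM', hsub, hne⟩ := exists_alt_pm hM hMn hfn hn he hf hef
  rcases pm_alt_struct hM hM' he hf hef hsub hne with ⟨h1, h2⟩ | ⟨h1, h2⟩
  · exact Or.inl ⟨G.mem_edgeSet.1 (hM'.1 h1), G.mem_edgeSet.1 (hM'.1 h2)⟩
  · exact Or.inr ⟨G.mem_edgeSet.1 (hM'.1 h1), G.mem_edgeSet.1 (hM'.1 h2)⟩

lemma pm_degree_ge (hM : IsPM G M) (hMn : M.ncard = n) (hfn : forcingNum G M = n - 1)
    (hn : 2 ≤ n) (v : V) : n ≤ (G.neighborSet v).ncard := by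
  classical
  obtain ⟨b, hbv, hvb⟩ := pm_partner hM v
  have claim : ∀ e ∈ M, ∃ w, w ∈ e ∧ w ∈ G.neighborSet v := by
    intro e heM
    induction e using Sym2.ind with
    | _ c d =>
      by_cases hev : s(c, d) = s(v, b)
      · exact ⟨b, hev ▸ Sym2.mem_mk_right v b, G.mem_edgeSet.1 (hM.1 hvb)⟩
      · rcases pm_c4 hM hMn hfn hn hvb heM (fun h => hev h.symm) with ⟨h1, _⟩ | ⟨h1, _⟩
        · exact ⟨c, Sym2.mem_mk_left c d, h1⟩
        · exact ⟨d, Sym2.mem_mk_right c d, h1⟩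
  set φ : Sym2 V → V := fun e =>
    if h : ∃ w, w ∈ e ∧ w ∈ G.neighborSet v then h.choose else v with hφ
  have hspec : ∀ e ∈ M, φ e ∈ e ∧ φ e ∈ G.neighborSet v := by
    intro e heM
    have h := claim e heM
    simp only [hφ, dif_pos h]
    exact h.choose_spec
  rw [← hMn]
  refine Set.ncard_le_ncard_of_injOn φ (fun e heM => (hspec e heM).2) ?_ (Set.toFinite _)
  intro e1 h1 e2 h2 hphi
  exact pm_eq_of_mem hM h1 h2 (hspec e1 h1).1 (hphi ▸ (hspec e2 h2).1)

end C4

lemma sym2_exists_rep {α : Type*} (z : Sym2 α) : ∃ x y, z = s(x, y) := by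
  induction z using Sym2.ind with
  | _ x y => exact ⟨x, y, rfl⟩

section Count
variable {V : Type*} [Fintype V] {G : SimpleGraph V} {M : Set (Sym2 V)} {n : ℕ}

lemma protected_pair (hn : 2 ≤ n) (hM : IsPM G M) (hMn : M.ncard = n)
    (hmin : ∀ e ∈ G.edgeSet, maxForcing (G.deleteEdges {e}) ≤ n - 2)
    {x : Sym2 V} (hx : x ∈ G.edgeSet \ M) :
    ∃ e f, e ∈ M ∧ f ∈ M ∧ e ≠ f ∧
      ∀ M', IsPM G M' → M \ {e, f} ⊆ M' → M' ≠ M → x ∈ M' := by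
  obtain ⟨hxE, hxM⟩ := hx
  have hPM' : IsPM (G.deleteEdges ({x} : Set (Sym2 V))) M := by
    refine ⟨fun g hg => ?_, hM.2.1, hM.2.2⟩
    rw [SimpleGraph.edgeSet_deleteEdges]
    exact ⟨hM.1 hg, fun h => hxM (Set.mem_singleton_iff.1 h ▸ hg)⟩
  have hb : forcingNum (G.deleteEdges ({x} : Set (Sym2 V))) M ≤ n - 2 :=
    (le_maxForcing hPM').trans (hmin x hxE)
  obtain ⟨S, hSf, hScard⟩ := forcingNum_exists hPM'
  have hSM : S ⊆ M := hSf.1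
  have hMS : 1 < (M \ S).ncard := by
    rw [Set.ncard_diff hSM (Set.toFinite _), hMn]
    omega
  obtain ⟨e, f, heMS, hfMS, hef⟩ := (Set.one_lt_ncard_iff (Set.toFinite _)).mp hMS
  refine ⟨e, f, heMS.1, hfMS.1, hef, ?_⟩
  intro M' hM' hsub hne
  by_contra hxM'
  have hPM'' : IsPM (G.deleteEdges ({x} : Set (Sym2 V))) M' := by
    refine ⟨fun g hg => ?_, hM'.2.1, hM'.2.2⟩
    rw [SimpleGraph.edgeSet_deleteEdges]
    exact ⟨hM'.1 hg, fun h => hxM' (Set.mem_singleton_iff.1 h ▸ hg)⟩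
  have hSM' : S ⊆ M' := fun g hg => hsub ⟨hSM hg, by
    rintro (rfl | rfl)
    exacts [heMS.2 hg, hfMS.2 hg]⟩
  exact hne (hSf.2 M' hPM'' hSM')

lemma protected_ncard_le_two (hM : IsPM G M) (hMn : M.ncard = n)
    (hfn : forcingNum G M = n - 1) (hn : 2 ≤ n)
    {e f : Sym2 V} (heM : e ∈ M) (hfM : f ∈ M) (hef : e ≠ f)
    (T : Set (Sym2 V))
    (hT : ∀ x ∈ T, x ∉ M ∧ ∀ M', IsPM G M' → M \ {e, f} ⊆ M' → M' ≠ M → x ∈ M') :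
    T.ncard ≤ 2 := by
  classical
  obtain ⟨a, b, rfl⟩ := sym2_exists_rep e
  obtain ⟨c, d, rfl⟩ := sym2_exists_rep f
  obtain ⟨hab, hcd, hac, had, hbc, hbd⟩ := pm_distinct hM heM hfM hef
  obtain ⟨M', hM', hsub, hne⟩ := exists_alt_pm hM hMn hfn hn heM hfM hef
  have hx4 : ∀ x ∈ T, x ∈ M' ∧ (x = s(a,c) ∨ x = s(a,d) ∨ x = s(b,c) ∨ x = s(b,d)) := by
    intro x hx
    have hxM' : x ∈ M' := (hT x hx).2 M' hM' hsub hne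
    exact ⟨hxM', pm_new_cross hM hM' heM hfM hef hsub hxM' (hT x hx).1⟩
  set φ : Sym2 V → V := fun x => if x = s(a,c) ∨ x = s(a,d) then a else b with hφ
  have hle : T.ncard ≤ ({a, b} : Set V).ncard := by
    refine Set.ncard_le_ncard_of_injOn φ (fun x hx => ?_) (fun x1 h1 x2 h2 heq => ?_)
      (Set.toFinite _)
    · by_cases h : x = s(a,c) ∨ x = s(a,d) <;> simp [hφ, h]
    · by_contra hne12
      obtain ⟨hx1M', hc1⟩ := hx4 x1 h1
      obtain ⟨hx2M', hc2⟩ := hx4 x2 h2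
      by_cases k1 : x1 = s(a,c) ∨ x1 = s(a,d) <;> by_cases k2 : x2 = s(a,c) ∨ x2 = s(a,d)
      · have ha1 : a ∈ x1 := by rcases k1 with rfl | rfl <;> exact Sym2.mem_mk_left _ _
        have ha2 : a ∈ x2 := by rcases k2 with rfl | rfl <;> exact Sym2.mem_mk_left _ _
        exact hM'.2.1 _ hx1M' _ hx2M' hne12 a ha1 ha2
      · simp only [hφ, if_pos k1, if_neg k2] at heq
        exact hab heq
      · simp only [hφ, if_neg k1, if_pos k2] at heq
        exact hab heq.symm
      · have hx1' : x1 = s(b,c) ∨ x1 = s(b,d) := by tauto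
        have hx2' : x2 = s(b,c) ∨ x2 = s(b,d) := by tauto
        have hb1 : b ∈ x1 := by rcases hx1' with rfl | rfl <;> exact Sym2.mem_mk_left _ _
        have hb2 : b ∈ x2 := by rcases hx2' with rfl | rfl <;> exact Sym2.mem_mk_left _ _
        exact hM'.2.1 _ hx1M' _ hx2M' hne12 b hb1 hb2
  rw [Set.ncard_pair hab] at hle
  exact hle

lemma edge_count (hcard : Fintype.card V = 2 * n) (hn : 2 ≤ n) (hM : IsPM G M)
    (hMn : M.ncard = n) (hfn : forcingNum G M = n - 1)
    (hmin : ∀ e ∈ G.edgeSet, maxForcing (G.deleteEdges {e}) ≤ n - 2) :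
    G.edgeSet.ncard ≤ n * n := by
  classical
  have hV : Nonempty V := by
    rw [← Fintype.card_pos_iff, hcard]; omega
  obtain ⟨v0⟩ := hV
  set σ := Fintype.equivFin (Sym2 V) with hσdef
  set Pp : Sym2 V → (Sym2 V × Sym2 V) → Prop := fun x p =>
    p.1 ∈ M ∧ p.2 ∈ M ∧ (σ p.1 : ℕ) < σ p.2 ∧
      ∀ M', IsPM G M' → M \ {p.1, p.2} ⊆ M' → M' ≠ M → x ∈ M' with hPpdef
  have hassign : ∀ x ∈ G.edgeSet \ M, ∃ p, Pp x p := by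
    intro x hx
    obtain ⟨e, f, heM, hfM, hef, hprot⟩ := protected_pair hn hM hMn hmin hx
    have hσne : (σ e : ℕ) ≠ (σ f : ℕ) := fun h => hef (σ.injective (Fin.ext h))
    rcases hσne.lt_or_gt with h | h
    · exact ⟨(e, f), heM, hfM, h, hprot⟩
    · refine ⟨(f, e), hfM, heM, h, ?_⟩
      intro M' h1 h2 h3
      exact hprot M' h1 (by rwa [Set.pair_comm f e] at h2) h3
  set g : Sym2 V → Sym2 V × Sym2 V := fun x =>
    if h : ∃ p, Pp x p then h.choose else (s(v0, v0), s(v0, v0)) with hgdef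
  have hgspec : ∀ x ∈ G.edgeSet \ M, Pp x (g x) := by
    intro x hx
    have h := hassign x hx
    simp only [hgdef, dif_pos h]
    exact h.choose_spec
  set N := (G.edgeSet \ M).toFinset with hNdef
  set Mf := M.toFinset with hMfdef
  set OP := (Mf ×ˢ Mf).filter (fun p => (σ p.1 : ℕ) < σ p.2) with hOPdef
  have hgOP : ∀ x ∈ N, g x ∈ OP := by
    intro x hx
    rw [hNdef, Set.mem_toFinset] at hx
    obtain ⟨h1, h2, h3, _⟩ := hgspec x hx
    simp only [hOPdef, Finset.mem_filter, Finset.mem_product, hMfdef, Set.mem_toFinset]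
    exact ⟨⟨h1, h2⟩, h3⟩
  have hcount := Finset.card_eq_sum_card_fiberwise hgOP
  have hfib : ∀ p ∈ OP, (N.filter (fun x => g x = p)).card ≤ 2 := by
    intro p hp
    simp only [hOPdef, Finset.mem_filter, Finset.mem_product, hMfdef, Set.mem_toFinset] at hp
    obtain ⟨⟨hp1, hp2⟩, hplt⟩ := hp
    have hpne : p.1 ≠ p.2 := fun h => by rw [h] at hplt; exact lt_irrefl _ hplt
    have h2 := protected_ncard_le_two hM hMn hfn hn hp1 hp2 hpne
      (↑(N.filter (fun x => g x = p)) : Set (Sym2 V)) ?_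
    · rwa [Set.ncard_coe_finset] at h2
    · intro x hx
      rw [Finset.mem_coe, Finset.mem_filter] at hx
      obtain ⟨hxN, hgx⟩ := hx
      rw [hNdef, Set.mem_toFinset] at hxN
      have hPp := hgspec x hxN
      rw [hgx] at hPp
      exact ⟨hxN.2, hPp.2.2.2⟩
  have hNle : N.card ≤ 2 * OP.card := by
    rw [hcount]
    calc ∑ p ∈ OP, (N.filter (fun x => g x = p)).card ≤ OP.card * 2 :=
          Finset.sum_le_card_nsmul _ _ _ hfib
      _ = 2 * OP.card := by ring
  have hMfcard : Mf.card = n := by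
    rw [hMfdef, ← Set.ncard_eq_toFinset_card', hMn]
  have hOP2 : OP.card + OP.card ≤ n * n - n := by
    have himg : (OP.image Prod.swap).card = OP.card :=
      Finset.card_image_of_injective _ Prod.swap_injective
    have hdisj : Disjoint OP (OP.image Prod.swap) := by
      rw [Finset.disjoint_left]
      intro p hp hps
      simp only [hOPdef, Finset.mem_filter] at hp
      obtain ⟨q, hq, hqs⟩ := Finset.mem_image.1 hps
      simp only [hOPdef, Finset.mem_filter] at hq
      have : (σ q.2 : ℕ) < σ q.1 := by
        have := hp.2
        rw [← hqs] at this
        simpa using this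
      omega
    have hsubOD : OP ∪ OP.image Prod.swap ⊆ Mf.offDiag := by
      intro p hp
      rw [Finset.mem_union] at hp
      rw [Finset.mem_offDiag]
      rcases hp with hp | hp
      · simp only [hOPdef, Finset.mem_filter, Finset.mem_product] at hp
        exact ⟨hp.1.1, hp.1.2, fun h => by rw [h] at hp; exact lt_irrefl _ hp.2⟩
      · obtain ⟨q, hq, rfl⟩ := Finset.mem_image.1 hp
        simp only [hOPdef, Finset.mem_filter, Finset.mem_product] at hq
        exact ⟨hq.1.2, hq.1.1, fun h => by
          have := hq.2
          rw [Prod.fst_swap, Prod.snd_swap] at h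
          rw [h] at this
          exact lt_irrefl _ this⟩
    calc OP.card + OP.card = OP.card + (OP.image Prod.swap).card := by rw [himg]
      _ = (OP ∪ OP.image Prod.swap).card := (Finset.card_union_of_disjoint hdisj).symm
      _ ≤ Mf.offDiag.card := Finset.card_le_card hsubOD
      _ = Mf.card * Mf.card - Mf.card := Finset.offDiag_card Mf
      _ = n * n - n := by rw [hMfcard]
  have hEdiff : (G.edgeSet \ M).ncard = N.card := Set.ncard_eq_toFinset_card' _
  have hsplit : (G.edgeSet \ M).ncard + M.ncard = G.edgeSet.ncard :=
    Set.ncard_diff_add_ncard_of_subset hM.1 (Set.toFinite _)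
  have hnn : n ≤ n * n := Nat.le_mul_of_pos_left n (by omega)
  omega

end Count

section Regular
variable {V : Type*} [Fintype V] {G : SimpleGraph V} {M : Set (Sym2 V)} {n : ℕ}

lemma pm_degree_eq (hcard : Fintype.card V = 2 * n) (hn : 2 ≤ n) (hM : IsPM G M)
    (hMn : M.ncard = n) (hfn : forcingNum G M = n - 1)
    (hmin : ∀ e ∈ G.edgeSet, maxForcing (G.deleteEdges {e}) ≤ n - 2) :
    ∀ v : V, (G.neighborSet v).ncard = n := by
  classical
  have hE := edge_count hcard hn hM hMn hfn hmin
  have hdeg : ∀ v : V, n ≤ (G.neighborSet v).ncard := pm_degree_ge hM hMn hfn hn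
  letI : DecidableRel G.Adj := Classical.decRel _
  have hrel : ∀ v : V, (G.neighborSet v).ncard = G.degree v := fun v => by
    rw [SimpleGraph.degree, neighborFinset_def, Set.ncard_eq_toFinset_card']
  have hsum : ∑ v, G.degree v = 2 * G.edgeFinset.card := G.sum_degrees_eq_twice_card_edges
  have hEcard : G.edgeFinset.card = G.edgeSet.ncard := by
    rw [← Set.ncard_coe_finset G.edgeFinset, SimpleGraph.coe_edgeFinset]
  by_contra h
  push_neg at h
  obtain ⟨v0, hv0⟩ := h
  have hlt : ∑ v : V, (n : ℕ) < ∑ v, G.degree v := by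
    refine Finset.sum_lt_sum (fun v _ => by rw [← hrel v]; exact hdeg v) ⟨v0, Finset.mem_univ _, ?_⟩
    have h1 := hdeg v0
    rw [hrel v0] at h1 hv0
    omega
  rw [Finset.sum_const, Finset.card_univ, hcard, smul_eq_mul] at hlt
  have : 2 * n * n < 2 * (n * n) := by
    calc 2 * n * n < ∑ v, G.degree v := hlt
      _ = 2 * G.edgeFinset.card := hsum
      _ = 2 * G.edgeSet.ncard := by rw [hEcard]
      _ ≤ 2 * (n * n) := by omega
  rw [mul_assoc] at this
  exact lt_irrefl _ this

end Regular

section Kappa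
variable {V : Type*} [Fintype V] {G : SimpleGraph V} {M : Set (Sym2 V)} {n : ℕ}

lemma pm_pa (hM : IsPM G M) :
    ∃ pa : V → V, (∀ v, pa v ≠ v ∧ s(v, pa v) ∈ M) ∧ ∀ v, pa (pa v) = v := by
  classical
  set pa : V → V := fun v => (pm_partner hM v).choose with hpadef
  have hpa : ∀ v, pa v ≠ v ∧ s(v, pa v) ∈ M := fun v => (pm_partner hM v).choose_spec
  refine ⟨pa, hpa, fun v => ?_⟩
  have h1 : s(pa v, pa (pa v)) ∈ M := (hpa (pa v)).2
  have h2 : s(pa v, v) ∈ M := by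
    have := (hpa v).2
    rwa [Sym2.eq_swap] at this
  exact pm_partner_unique hM h1 h2

lemma vertexConn_eq (hcard : Fintype.card V = 2 * n) (hn : 2 ≤ n) (hM : IsPM G M)
    (hMn : M.ncard = n) (hfn : forcingNum G M = n - 1)
    (hdeg : ∀ v : V, (G.neighborSet v).ncard = n) :
    vertexConn G = n := by
  classical
  have hV : Nonempty V := by
    rw [← Fintype.card_pos_iff, hcard]; omega
  obtain ⟨v0⟩ := hV
  -- upper bound witness
  have hmem : n ∈ {k | ∃ X : Set V, X.ncard = k ∧
      (¬ (G.induce Xᶜ).Connected ∨ Xᶜ.ncard ≤ 1)} := by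
    refine ⟨G.neighborSet v0, hdeg v0, Or.inl ?_⟩
    intro hconn
    have hv0 : v0 ∈ (G.neighborSet v0)ᶜ := fun h => G.irrefl (by exact h)
    have hcompl : (G.neighborSet v0)ᶜ.ncard = n := by
      have := Set.ncard_add_ncard_compl (G.neighborSet v0)
      rw [hdeg v0, Nat.card_eq_fintype_card, hcard] at this
      omega
    have hne : ((G.neighborSet v0)ᶜ \ {v0}).Nonempty := by
      apply Set.nonempty_of_ncard_ne_zero
      rw [Set.ncard_diff_singleton_of_mem hv0, hcompl]
      omega
    obtain ⟨w, hwc, hwv⟩ := hne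
    obtain ⟨p⟩ := hconn.preconnected ⟨v0, hv0⟩ ⟨w, hwc⟩
    cases p with
    | nil => exact hwv rfl
    | cons h p' =>
      rename_i mid
      have : G.Adj v0 ↑mid := h
      exact mid.2 this
  refine le_antisymm (Nat.sInf_le hmem) (le_csInf ⟨n, hmem⟩ ?_)
  rintro k ⟨X, hXcard, hdis⟩
  by_contra hk
  push_neg at hk
  have hXc : Xᶜ.ncard = 2 * n - k := by
    have := Set.ncard_add_ncard_compl X
    rw [hXcard, Nat.card_eq_fintype_card, hcard] at this
    omega
  have hnc : ¬ (G.induce Xᶜ).Connected := by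
    rcases hdis with h | h
    · exact h
    · rw [hXc] at h; omega
  have hXcne : Xᶜ.Nonempty := by
    apply Set.nonempty_of_ncard_ne_zero
    omega
  have hnpre : ¬ (G.induce Xᶜ).Preconnected := by
    intro hpre
    haveI := hXcne.to_subtype
    exact hnc ⟨hpre⟩
  rw [SimpleGraph.Preconnected] at hnpre
  push_neg at hnpre
  obtain ⟨u, w, huw⟩ := hnpre
  set P : Set V := {y | ∃ hy : y ∈ Xᶜ, (G.induce Xᶜ).Reachable u ⟨y, hy⟩} with hPdef
  have huP : (u : V) ∈ P := ⟨u.2, by exact Reachable.refl _⟩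
  have hwXc : (w : V) ∈ Xᶜ := w.2
  have hwP : (w : V) ∉ P := by
    rintro ⟨hy, hr⟩
    exact huw (by convert hr)
  have closure : ∀ p ∈ P, ∀ q, q ∈ Xᶜ → G.Adj p q → q ∈ P := by
    rintro p ⟨hp, hr⟩ q hq hadj
    exact ⟨hq, hr.trans (SimpleGraph.Adj.reachable (by exact hadj))⟩
  set Q : Set V := Xᶜ \ P with hQdef
  have noPQ : ∀ p ∈ P, ∀ q ∈ Q, ¬ G.Adj p q := by
    intro p hp q hq hadj
    exact hq.2 (closure p hp q hq.1 hadj)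
  have hPX : P ⊆ Xᶜ := fun y hy => hy.1
  obtain ⟨pa, hpa, hpainv⟩ := pm_pa hM
  have hPpart : ∀ p ∈ P, pa p ∈ X := by
    intro p hp
    by_contra hyX
    have hyXc : pa p ∈ Xᶜ := hyX
    by_cases hyP : pa p ∈ P
    · -- M-edge inside P : use w side
      set q0 : V := ↑w with hq0def
      have hq0Q : q0 ∈ Q := ⟨hwXc, hwP⟩
      have hfM : s(q0, pa q0) ∈ M := (hpa q0).2
      have heM : s(p, pa p) ∈ M := (hpa p).2
      have hq0P : q0 ∉ P := hwP
      have hef : s(p, pa p) ≠ s(q0, pa q0) := by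
        intro h
        have : q0 ∈ s(p, pa p) := h ▸ Sym2.mem_mk_left q0 (pa q0)
        rcases Sym2.mem_iff.1 this with rfl | hh
        · exact hq0P hp
        · exact hq0P (hh ▸ hyP)
      rcases pm_c4 hM hMn hfn hn heM hfM hef with ⟨h1, _⟩ | ⟨_, h2⟩
      · exact noPQ p hp q0 hq0Q h1
      · exact noPQ (pa p) hyP q0 hq0Q h2
    · -- pa p ∈ Q : direct M-edge between P and Q
      exact noPQ p hp (pa p) ⟨hyXc, hyP⟩ (G.mem_edgeSet.1 (hM.1 (hpa p).2))
  have hQpart : ∀ q ∈ Q, pa q ∈ X := by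
    intro q hq
    by_contra hyX
    have hyXc : pa q ∈ Xᶜ := hyX
    by_cases hyP : pa q ∈ P
    · exact noPQ (pa q) hyP q hq ((G.mem_edgeSet.1 (hM.1 (hpa q).2)).symm)
    · -- M-edge inside Q : use u side
      set p0 : V := ↑u with hp0def
      have hp0P : p0 ∈ P := huP
      have hfM : s(p0, pa p0) ∈ M := (hpa p0).2
      have heM : s(q, pa q) ∈ M := (hpa q).2
      have hef : s(q, pa q) ≠ s(p0, pa p0) := by
        intro h
        have : p0 ∈ s(q, pa q) := h ▸ Sym2.mem_mk_left p0 (pa p0)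
        rcases Sym2.mem_iff.1 this with rfl | hh
        · exact hq.2 hp0P
        · rw [← hh] at hyP
          exact hyP hp0P
      rcases pm_c4 hM hMn hfn hn heM hfM hef with ⟨h1, _⟩ | ⟨_, h2⟩
      · exact noPQ p0 hp0P q ⟨hq.1, hq.2⟩ h1.symm
      · exact noPQ p0 hp0P (pa q) ⟨hyXc, hyP⟩ h2.symm
  have hinj : Xᶜ.ncard ≤ X.ncard := by
    refine Set.ncard_le_ncard_of_injOn pa (fun v hv => ?_) (fun v1 _ v2 _ hpaeq => ?_)
      (Set.toFinite _)
    · by_cases hvP : v ∈ P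
      · exact hPpart v hvP
      · exact hQpart v ⟨hv, hvP⟩
    · rw [← hpainv v1, hpaeq, hpainv v2]
  rw [hXc, hXcard] at hinj
  omega

end Kappa

section Lambda
variable {V : Type*} [Fintype V] {G : SimpleGraph V} {n : ℕ}

lemma cross_count (hcard : Fintype.card V = 2 * n) (hn : 2 ≤ n)
    (hdeg : ∀ v : V, (G.neighborSet v).ncard = n)
    {F : Set (Sym2 V)} (P : Set V) (hPne : P.Nonempty) (hPm : P.ncard ≤ n)
    (hcross : ∀ p ∈ P, ∀ q ∈ Pᶜ, G.Adj p q → s(p, q) ∈ F) :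
    n ≤ F.ncard := by
  classical
  set m := P.ncard with hmdef
  have hm1 : 1 ≤ m := (Set.ncard_pos (Set.toFinite _)).2 hPne
  set Pf := P.toFinset with hPfdef
  set Qf := Pᶜ.toFinset with hQfdef
  have hPfcard : Pf.card = m := by rw [hPfdef, ← Set.ncard_eq_toFinset_card']
  set CP := (Pf ×ˢ Qf).filter (fun z : V × V => G.Adj z.1 z.2) with hCPdef
  have hrel : ∀ v : V, (G.neighborFinset v).card = n := fun v => by
    rw [← hdeg v, neighborFinset_def, Set.ncard_eq_toFinset_card']
  -- lower bound on CP.card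
  have hCPbi : CP = Pf.biUnion
      (fun p => ({p} : Finset V) ×ˢ (Qf.filter (fun q => G.Adj p q))) := by
    ext z
    simp only [hCPdef, Finset.mem_filter, Finset.mem_product, Finset.mem_biUnion,
      Finset.mem_singleton]
    constructor
    · rintro ⟨⟨h1, h2⟩, h3⟩
      exact ⟨z.1, h1, rfl, h2, h3⟩
    · rintro ⟨p, hp, rfl, hq, hadj⟩
      exact ⟨⟨hp, hq⟩, hadj⟩
  have hfilt : ∀ p ∈ Pf, n - m + 1 ≤ (Qf.filter (fun q => G.Adj p q)).card := by
    intro p hp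
    have hsub : G.neighborFinset p ⊆ (Pf.erase p) ∪ (Qf.filter (fun q => G.Adj p q)) := by
      intro q hq
      rw [SimpleGraph.mem_neighborFinset] at hq
      rw [Finset.mem_union]
      by_cases hqP : q ∈ P
      · left
        rw [Finset.mem_erase]
        exact ⟨fun h => G.irrefl (h ▸ hq), Set.mem_toFinset.2 hqP⟩
      · right
        rw [Finset.mem_filter]
        exact ⟨Set.mem_toFinset.2 hqP, hq⟩
    have hc := Finset.card_le_card hsub
    rw [hrel p] at hc
    have hcc := Finset.card_union_le (Pf.erase p) (Qf.filter (fun q => G.Adj p q))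
    have herase : (Pf.erase p).card = m - 1 := by
      rw [Finset.card_erase_of_mem hp, hPfcard]
    omega
  have hCPcard : m * (n - m + 1) ≤ CP.card := by
    rw [hCPbi, Finset.card_biUnion]
    · calc m * (n - m + 1) = ∑ _p ∈ Pf, (n - m + 1) := by
            rw [Finset.sum_const, smul_eq_mul, hPfcard]
        _ ≤ ∑ p ∈ Pf, (({p} : Finset V) ×ˢ (Qf.filter (fun q => G.Adj p q))).card := by
            refine Finset.sum_le_sum (fun p hp => ?_)
            rw [Finset.card_product, Finset.card_singleton, one_mul]
            exact hfilt p hp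
    · intro p1 h1 p2 h2 hne
      rw [Function.onFun, Finset.disjoint_left]
      rintro ⟨z1, z2⟩ hz1 hz2
      rw [Finset.mem_product, Finset.mem_singleton] at hz1 hz2
      exact hne (hz1.1.symm.trans hz2.1)
  have hmn : n ≤ m * (n - m + 1) := by
    have h1 : m * (n - m + 1) = m * (n - m) + m := by ring
    have h2 : (n - m) ≤ m * (n - m) := Nat.le_mul_of_pos_left _ hm1
    omega
  -- inject CP into F
  have hinj : CP.card ≤ F.ncard := by
    rw [← Set.ncard_coe_finset CP]
    refine Set.ncard_le_ncard_of_injOn (fun z => s(z.1, z.2)) ?_ ?_ (Set.toFinite _)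
    · intro z hz
      rw [Finset.mem_coe, hCPdef, Finset.mem_filter, Finset.mem_product] at hz
      exact hcross z.1 (Set.mem_toFinset.1 hz.1.1) z.2 (Set.mem_toFinset.1 hz.1.2) hz.2
    · rintro ⟨p1, q1⟩ hz1 ⟨p2, q2⟩ hz2 heq
      rw [Finset.mem_coe, hCPdef, Finset.mem_filter, Finset.mem_product] at hz1 hz2
      rcases Sym2.eq_iff.1 heq with ⟨rfl, rfl⟩ | ⟨rfl, rfl⟩
      · rfl
      · exact absurd (Set.mem_toFinset.1 hz1.1.1)
          (Set.mem_toFinset.1 hz2.1.2)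
  omega

lemma edgeConn_eq (hcard : Fintype.card V = 2 * n) (hn : 2 ≤ n)
    (hdeg : ∀ v : V, (G.neighborSet v).ncard = n) :
    edgeConn G = n := by
  classical
  have hV : Nonempty V := by
    rw [← Fintype.card_pos_iff, hcard]; omega
  obtain ⟨v0⟩ := hV
  have hrel : ∀ v : V, (G.neighborFinset v).card = n := fun v => by
    rw [← hdeg v, neighborFinset_def, Set.ncard_eq_toFinset_card']
  have hmem : n ∈ {k | ∃ F : Set (Sym2 V), F ⊆ G.edgeSet ∧ F.ncard = k ∧
      ¬ (G.deleteEdges F).Connected} := by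
    refine ⟨G.incidenceSet v0, G.incidenceSet_subset v0, ?_, ?_⟩
    · rw [Set.ncard_eq_toFinset_card']
      have : (G.incidenceSet v0).toFinset = G.incidenceFinset v0 := by
        simp [SimpleGraph.incidenceFinset]
      rw [this, SimpleGraph.card_incidenceFinset_eq_degree]
      rw [← hrel v0]
      rfl
    · intro hconn
      have hw : ∃ w : V, w ≠ v0 := by
        by_contra hno
        push_neg at hno
        have : Fintype.card V ≤ 1 := Fintype.card_le_one_iff.2 (fun a b => by
          rw [hno a, hno b])
        omega
      obtain ⟨w, hwv⟩ := hw
      obtain ⟨p⟩ := hconn.preconnected v0 w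
      cases p with
      | nil => exact hwv rfl
      | cons h p' =>
        rw [SimpleGraph.deleteEdges_adj] at h
        exact h.2 ⟨G.mem_edgeSet.2 h.1, Sym2.mem_mk_left _ _⟩
  refine le_antisymm (Nat.sInf_le hmem) (le_csInf ⟨n, hmem⟩ ?_)
  rintro k ⟨F, hFE, hFcard, hFnc⟩
  by_contra hk
  push_neg at hk
  haveI : Nonempty V := ⟨v0⟩
  have hnpre : ¬ (G.deleteEdges F).Preconnected := by
    intro hpre
    exact hFnc ⟨hpre⟩
  rw [SimpleGraph.Preconnected] at hnpre
  push_neg at hnpre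
  obtain ⟨u, w, huw⟩ := hnpre
  set P : Set V := {y | (G.deleteEdges F).Reachable u y} with hPdef
  have huP : u ∈ P := Reachable.refl _
  have hwP : w ∉ P := huw
  have closure : ∀ p ∈ P, ∀ q ∈ Pᶜ, G.Adj p q → s(p, q) ∈ F := by
    intro p hp q hq hadj
    by_contra hsF
    exact hq (hp.trans (SimpleGraph.Adj.reachable
      (SimpleGraph.deleteEdges_adj.2 ⟨hadj, hsF⟩)))
  have hPQ : P.ncard + Pᶜ.ncard = 2 * n := by
    have := Set.ncard_add_ncard_compl P
    rwa [Nat.card_eq_fintype_card, hcard] at this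
  have hQne : Pᶜ.Nonempty := ⟨w, hwP⟩
  have hle : n ≤ F.ncard := by
    by_cases hPm : P.ncard ≤ n
    · exact cross_count hcard hn hdeg P ⟨u, huP⟩ hPm closure
    · refine cross_count hcard hn hdeg Pᶜ hQne (by omega) ?_
      intro p hp q hq hadj
      rw [compl_compl] at hq
      rw [Sym2.eq_swap]
      exact closure q hq p hp hadj.symm
  omega

end Lambda

end Helpers

/-- Lemma 2.3(ii), second part. -/
theorem stmt4 {V : Type*} [Fintype V] (n : ℕ) (hn : 2 ≤ n)
    (G : SimpleGraph V) (hcard : Fintype.card V = 2 * n)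
    (hPM : ∃ M, IsPM G M) (hF : maxForcing G = n - 1)
    (hmin : ∀ e ∈ G.edgeSet, maxForcing (G.deleteEdges {e}) ≤ n - 2) :
    (∀ v : V, (G.neighborSet v).ncard = n) ∧
      vertexConn G = n ∧ edgeConn G = n := by
  obtain ⟨M, hM, hfnmax⟩ := exists_max_pm hPM
  rw [hF] at hfnmax
  have hMn : M.ncard = n := pm_ncard hM hcard
  have hdeg := pm_degree_eq hcard hn hM hMn hfnmax hmin
  exact ⟨hdeg, vertexConn_eq hcard hn hM hMn hfnmax hdeg, edgeConn_eq hcard hn hdeg⟩
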